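/- Let (V, Q) be a positive definite quadratic space over ℚ and x₁, x₂ ∈ V linearly independent with integer Gram matrix G. If ν₂(det G) is odd, then 5·Q(x₁) is not represented by ℚx₁ + ℚx₂. -/

import Mathlib

private lemma zmod8_step : ∀ u v m w : ZMod 8,
    u^2 + 2*(2*w+1)*v^2 = 5*m^2 →
    (ZMod.castHom (show 2 ∣ 8 by norm_num) (ZMod 2) u = 0 ∧
     ZMod.castHom (show 2 ∣ 8 by norm_num) (ZMod 2) v = 0 ∧
     ZMod.castHom (show 2 ∣ 8 by norm_num) (ZMod 2) m = 0) := by decide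

private lemma descend (w : ℤ) : ∀ n : ℕ, ∀ U V M : ℤ,
    U.natAbs + V.natAbs + M.natAbs ≤ n →
    U^2 + 2*(2*w+1)*V^2 = 5*M^2 → U = 0 ∧ V = 0 ∧ M = 0 := by
  intro n
  induction n with
  | zero => intro U V M h _; omega
  | succ n ih =>
    intro U V M hle heq
    have h8 : (U:ZMod 8)^2 + 2*(2*(w:ZMod 8)+1)*(V:ZMod 8)^2 = 5*(M:ZMod 8)^2 := by
      have h := congrArg (Int.cast : ℤ → ZMod 8) heq
      push_cast at h
      linear_combination h
    obtain ⟨hu, hv, hm⟩ := zmod8_step _ _ _ _ h8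
    rw [map_intCast, ZMod.intCast_zmod_eq_zero_iff_dvd] at hu hv hm
    obtain ⟨U₀, rfl⟩ := hu; obtain ⟨V₀, rfl⟩ := hv; obtain ⟨M₀, rfl⟩ := hm
    have heq' : U₀^2 + 2*(2*w+1)*V₀^2 = 5*M₀^2 := by
      have h4 : (4:ℤ) * (U₀^2 + 2*(2*w+1)*V₀^2) = 4 * (5*M₀^2) := by
        linear_combination heq
      exact mul_left_cancel₀ (by norm_num) h4
    by_cases hz : U₀.natAbs + V₀.natAbs + M₀.natAbs = 0
    · refine ⟨?_, ?_, ?_⟩ <;> omega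
    · obtain ⟨h1, h2, h3⟩ := ih U₀ V₀ M₀ (by omega) heq'
      refine ⟨?_, ?_, ?_⟩ <;> omega

private lemma no_sol (D : ℤ) (hval : Odd (padicValInt 2 D)) :
    ∀ U V M : ℤ, U^2 + D*V^2 = 5*M^2 → M = 0 := by
  have hD0 : D ≠ 0 := by
    rintro rfl
    rw [padicValInt.zero] at hval
    simp at hval
  set e := padicValInt 2 D with he
  obtain ⟨c, hc⟩ := padicValInt_dvd (p := 2) D
  have hcodd : Odd c := by
    rcases Int.even_or_odd c with hev | ho
    · exfalso
      obtain ⟨c', rfl⟩ := hev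
      have hdd : ((2:ℕ):ℤ) ^ (e + 1) ∣ D := ⟨c', by rw [hc]; push_cast; ring⟩
      rw [padicValInt_dvd_iff] at hdd
      omega
    · exact ho
  obtain ⟨k, hk⟩ := hval
  obtain ⟨w, hw⟩ := hcodd
  intro U V M heq
  have hpow : ((2:ℕ):ℤ) ^ e = 2^k * 2^k * 2 := by
    push_cast
    rw [hk, two_mul, pow_succ, pow_add]
  have heq2 : U^2 + 2*(2*w+1)*(2^k*V)^2 = 5*M^2 := by
    rw [hc, hpow, hw] at heq
    linear_combination heq
  exact (descend w _ U (2^k*V) M le_rfl heq2).2.2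

/-- Let `(V, Q)` be a positive definite quadratic space over `ℚ` and `x₁, x₂ ∈ V`
linearly independent with integer Gram matrix `G`.  If `ν₂(det G)` is odd, then
`5·Q(x₁)` is not represented by `ℚx₁ + ℚx₂`. -/
theorem stmt11 (V : Type) [AddCommGroup V] [Module ℚ V] (Q : QuadraticForm ℚ V)
    (hpos : ∀ x : V, x ≠ 0 → 0 < Q x)
    (x₁ x₂ : V) (hli : LinearIndependent ℚ ![x₁, x₂])
    (G : Matrix (Fin 2) (Fin 2) ℤ)
    (hG : ∀ i j, (G i j : ℚ) = QuadraticMap.polar (⇑Q) (![x₁, x₂] i) (![x₁, x₂] j) / 2)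
    (hval : Odd (padicValInt 2 G.det)) :
    ¬ ∃ a b : ℚ, Q (a • x₁ + b • x₂) = 5 * Q x₁ := by
  rintro ⟨a, b, hab⟩
  set m : ℤ := G 0 0 with hm
  set r : ℤ := G 0 1 with hr
  set n : ℤ := G 1 1 with hn
  -- basic facts about the Gram matrix
  have hQ1 : Q x₁ = (m : ℚ) := by
    have := hG 0 0
    simp only [Matrix.cons_val_zero] at this
    rw [this, QuadraticMap.polar_self, two_smul]
    ring
  have hQ2 : Q x₂ = (n : ℚ) := by
    have := hG 1 1
    simp only [Matrix.cons_val_one, Matrix.head_cons, Matrix.cons_val_zero] at this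
    rw [this, QuadraticMap.polar_self, two_smul]
    ring
  have hpol : QuadraticMap.polar (⇑Q) x₁ x₂ = 2 * (r : ℚ) := by
    have := hG 0 1
    simp only [Matrix.cons_val_zero, Matrix.cons_val_one, Matrix.head_cons] at this
    rw [this]; ring
  have hsym : G 1 0 = r := by
    have h1 := hG 1 0
    have h2 := hG 0 1
    simp only [Matrix.cons_val_zero, Matrix.cons_val_one, Matrix.head_cons] at h1 h2
    have : ((G 1 0 : ℤ) : ℚ) = ((G 0 1 : ℤ) : ℚ) := by
      rw [h1, h2, QuadraticMap.polar_comm]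
    exact_mod_cast this
  have hdet : G.det = m * n - r * r := by
    rw [Matrix.det_fin_two, hsym]
  -- x₁ ≠ 0 so m > 0
  have hx1 : x₁ ≠ 0 := by
    have := hli.ne_zero 0
    simpa using this
  have hmpos : (0:ℚ) < (m:ℚ) := hQ1 ▸ hpos x₁ hx1
  have hm0 : m ≠ 0 := by exact_mod_cast hmpos.ne'
  -- the rational equation
  have hexp : a^2 * (m:ℚ) + b^2 * (n:ℚ) + a * b * (2 * (r:ℚ)) = 5 * (m:ℚ) := by
    have h1 : Q (a • x₁ + b • x₂)
        = Q (a • x₁) + Q (b • x₂) + QuadraticMap.polar (⇑Q) (a • x₁) (b • x₂) := by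
      rw [QuadraticMap.polar]; ring
    rw [h1, QuadraticMap.map_smul, QuadraticMap.map_smul,
      QuadraticMap.polar_smul_left, QuadraticMap.polar_smul_right] at hab
    rw [hQ1, hQ2, hpol] at hab
    simp only [smul_eq_mul] at hab
    linear_combination hab
  -- clear denominators
  set A : ℤ := a.num * (b.den : ℤ) with hA
  set B : ℤ := b.num * (a.den : ℤ) with hB
  set t : ℤ := (a.den : ℤ) * (b.den : ℤ) with ht
  have hden_a : ((a.den : ℚ)) ≠ 0 := by exact_mod_cast a.den_ne_zero
  have hden_b : ((b.den : ℚ)) ≠ 0 := by exact_mod_cast b.den_ne_zero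
  have hnum_a : (a.num : ℚ) = a * (a.den : ℚ) :=
    (div_eq_iff hden_a).mp (Rat.num_div_den a)
  have hnum_b : (b.num : ℚ) = b * (b.den : ℚ) :=
    (div_eq_iff hden_b).mp (Rat.num_div_den b)
  have hAq : ((A : ℤ) : ℚ) = a * ((t : ℤ) : ℚ) := by
    rw [hA, ht]
    push_cast
    linear_combination ((b.den : ℚ)) * hnum_a
  have hBq : ((B : ℤ) : ℚ) = b * ((t : ℤ) : ℚ) := by
    rw [hB, ht]
    push_cast
    linear_combination ((a.den : ℚ)) * hnum_b
  -- the integer equation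
  have hint : (m * A + r * B)^2 + G.det * B^2 = 5 * (m * t)^2 := by
    have : (((m * A + r * B)^2 + G.det * B^2 : ℤ) : ℚ) = ((5 * (m * t)^2 : ℤ) : ℚ) := by
      rw [hdet]
      push_cast
      rw [hAq, hBq]
      linear_combination ((m : ℚ) * (t:ℚ)^2) * hexp
    exact_mod_cast this
  have hM0 : m * t = 0 := no_sol G.det hval _ _ _ hint
  have ht0 : t ≠ 0 := by
    rw [ht]
    positivity
  exact hm0 (by
    rcases mul_eq_zero.mp hM0 with h | h
    · exact h
    · exact absurd h ht0)
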